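/- Let $-1<\mu<1$ and $w(x)=(1-x^2)^{\mu}$ on $\Omega=(-1,1)$. If $\eta, u$ belong to the weighted Sobolev space $H^1_w(\Omega)$, then the product $\eta u$ belongs to $H^1_w(\Omega)$ and there is a constant $C>0$ (independent of $\eta,u$) such that $\|\eta u\|_{1,w} \le C\|\eta\|_{1,w}\|u\|_{1,w}$. -/

import Mathlib

open MeasureTheory Set

/-- The Jacobi weight `w(x) = (1-x^2)^μ`. -/
noncomputable def jw (μ : ℝ) (x : ℝ) : ℝ := (1 - x^2) ^ μ

/-- Membership in the weighted Sobolev space `H^1_w(-1,1)`. -/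
def MemH1w (μ : ℝ) (f : ℝ → ℝ) : Prop :=
  DifferentiableOn ℝ f (Ioo (-1) 1) ∧
  IntegrableOn (fun x => ((f x)^2 + (deriv f x)^2) * jw μ x) (Ioo (-1) 1)

/-- The `H^1_w` norm. -/
noncomputable def H1wNorm (μ : ℝ) (f : ℝ → ℝ) : ℝ :=
  Real.sqrt (∫ x in Ioo (-1:ℝ) 1, ((f x)^2 + (deriv f x)^2) * jw μ x)

/-- Membership in the weighted space `L^2_w(-1,1)`. -/
def MemL2w (μ : ℝ) (f : ℝ → ℝ) : Prop :=
  IntegrableOn (fun x => (f x)^2 * jw μ x) (Ioo (-1) 1)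

/-- The `L^2_w` norm. -/
noncomputable def L2wNorm (μ : ℝ) (f : ℝ → ℝ) : ℝ :=
  Real.sqrt (∫ x in Ioo (-1:ℝ) 1, (f x)^2 * jw μ x)

/-- Membership in the weighted Sobolev space `H^2_w(-1,1)`. -/
def MemH2w (μ : ℝ) (f : ℝ → ℝ) : Prop :=
  DifferentiableOn ℝ f (Ioo (-1) 1) ∧ DifferentiableOn ℝ (deriv f) (Ioo (-1) 1) ∧
  IntegrableOn
    (fun x => ((f x)^2 + (deriv f x)^2 + (deriv (deriv f) x)^2) * jw μ x) (Ioo (-1) 1)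

/-- The `H^2_w` norm. -/
noncomputable def H2wNorm (μ : ℝ) (f : ℝ → ℝ) : ℝ :=
  Real.sqrt (∫ x in Ioo (-1:ℝ) 1,
    ((f x)^2 + (deriv f x)^2 + (deriv (deriv f) x)^2) * jw μ x)

/-- `H^1_{w,0}`: functions of `H^1_w` vanishing at `±1`. -/
def MemH1w0 (μ : ℝ) (f : ℝ → ℝ) : Prop :=
  MemH1w μ f ∧ f (-1) = 0 ∧ f 1 = 0

/-- The bilinear form `A_b(φ,ψ) = (φ,ψ)_w + b ∫ φ' (ψ w)'`. -/
noncomputable def bilinA (μ b : ℝ) (φ ψ : ℝ → ℝ) : ℝ :=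
  (∫ x in Ioo (-1:ℝ) 1, φ x * ψ x * jw μ x) +
  b * ∫ x in Ioo (-1:ℝ) 1, deriv φ x * deriv (fun y => ψ y * jw μ y) x

/-- `H^1_w(-1,1)` with Jacobi weight, `-1<μ<1`, is a Banach algebra:
`η u ∈ H^1_w` with `‖η u‖_{1,w} ≤ C ‖η‖_{1,w} ‖u‖_{1,w}`. -/
lemma jw_cont (ν : ℝ) : ContinuousOn (jw ν) (Ioo (-1:ℝ) 1) := by
  apply ContinuousOn.rpow_const
  · exact (continuous_const.sub (continuous_pow 2)).continuousOn
  · intro x hx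
    left
    have h1 := hx.1; have h2 := hx.2
    nlinarith

lemma jw_pos {ν : ℝ} {x : ℝ} (hx : x ∈ Ioo (-1:ℝ) 1) : 0 < jw ν x := by
  have h1 := hx.1; have h2 := hx.2
  exact Real.rpow_pos_of_pos (by nlinarith) _

lemma jw_nonneg {ν : ℝ} {x : ℝ} (hx : x ∈ Ioo (-1:ℝ) 1) : 0 ≤ jw ν x := (jw_pos hx).le

lemma jw_integrableOn {ν : ℝ} (hν : -1 < ν) : IntegrableOn (jw ν) (Ioo (-1:ℝ) 1) := by
  have hrp : ∀ x : ℝ, x ∈ Ioo (-1:ℝ) 1 → (0:ℝ) < 1 - x ∧ (0:ℝ) < 1 + x := by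
    intro x hx; exact ⟨by linarith [hx.2], by linarith [hx.1]⟩
  have hMnn : (0:ℝ) ≤ max ((2:ℝ)^ν) 1 := le_max_of_le_right zero_le_one
  have hfac : ∀ x : ℝ, x ∈ Ioo (-1:ℝ) 1 → jw ν x = (1-x)^ν * (1+x)^ν := by
    intro x hx
    obtain ⟨h1, h2⟩ := hrp x hx
    unfold jw
    rw [← Real.mul_rpow h1.le h2.le]
    ring_nf
  have hbnd : ∀ t : ℝ, 1 ≤ t → t ≤ 2 → t ^ ν ≤ max ((2:ℝ)^ν) 1 := by
    intro t h1 h2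
    rcases le_or_gt 0 ν with h | h
    · exact le_max_of_le_left (Real.rpow_le_rpow (by linarith) h2 h)
    · refine le_max_of_le_right ?_
      calc t ^ ν ≤ 1 ^ ν := Real.rpow_le_rpow_of_nonpos one_pos h1 h.le
      _ = 1 := Real.one_rpow ν
  -- right half
  have hR : IntegrableOn (jw ν) (Ioo (0:ℝ) 1) := by
    have h1 : IntervalIntegrable (fun x : ℝ => x ^ ν) volume 0 1 :=
      intervalIntegral.intervalIntegrable_rpow' hν
    have h2 := h1.comp_sub_left 1
    norm_num at h2
    have hg : IntegrableOn (fun x : ℝ => max ((2:ℝ)^ν) 1 * (1 - x) ^ ν) (Ioo (0:ℝ) 1) :=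
      ((h2.2).mono_set Ioo_subset_Ioc_self).const_mul _
    apply Integrable.mono' hg
    · exact ((jw_cont ν).mono (Ioo_subset_Ioo (by norm_num) le_rfl)).aestronglyMeasurable
        measurableSet_Ioo
    · filter_upwards [ae_restrict_mem measurableSet_Ioo] with x hx
      have hx' : x ∈ Ioo (-1:ℝ) 1 := Ioo_subset_Ioo (by norm_num) le_rfl hx
      obtain ⟨h1x, h2x⟩ := hrp x hx'
      rw [Real.norm_eq_abs, abs_of_nonneg (jw_nonneg hx'), hfac x hx', mul_comm (max _ _)]
      exact mul_le_mul_of_nonneg_left (hbnd _ (by linarith [hx.1]) (by linarith [hx.2]))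
        (Real.rpow_nonneg h1x.le ν)
  -- left half
  have hL : IntegrableOn (jw ν) (Ioo (-1:ℝ) 0) := by
    have h1 : IntervalIntegrable (fun x : ℝ => x ^ ν) volume 0 1 :=
      intervalIntegral.intervalIntegrable_rpow' hν
    have h2 := h1.comp_add_right 1
    norm_num at h2
    have hg : IntegrableOn (fun x : ℝ => max ((2:ℝ)^ν) 1 * (x + 1) ^ ν) (Ioo (-1:ℝ) 0) :=
      ((h2.1).mono_set Ioo_subset_Ioc_self).const_mul _
    apply Integrable.mono' hg
    · exact ((jw_cont ν).mono (Ioo_subset_Ioo le_rfl (by norm_num))).aestronglyMeasurable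
        measurableSet_Ioo
    · filter_upwards [ae_restrict_mem measurableSet_Ioo] with x hx
      have hx' : x ∈ Ioo (-1:ℝ) 1 := Ioo_subset_Ioo le_rfl (by norm_num) hx
      obtain ⟨h1x, h2x⟩ := hrp x hx'
      rw [Real.norm_eq_abs, abs_of_nonneg (jw_nonneg hx'), hfac x hx', mul_comm (max _ _),
        mul_comm ((1-x)^ν)]
      have : (1 + x) ^ ν = (x + 1) ^ ν := by ring_nf
      rw [← this]
      exact mul_le_mul_of_nonneg_left (hbnd _ (by linarith [hx.2]) (by linarith [hx.1]))
        (Real.rpow_nonneg h2x.le ν)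
  have hsplit : Ioo (-1:ℝ) 1 = Ioo (-1) 0 ∪ Ico 0 1 :=
    (Ioo_union_Ico_eq_Ioo (by norm_num) (by norm_num)).symm
  rw [hsplit]
  exact hL.union ((integrableOn_Ico_iff_integrableOn_Ioo).mpr hR)

lemma memH1w_int1 {μ : ℝ} {u : ℝ → ℝ} (hu : MemH1w μ u) :
    IntegrableOn (fun x => (u x)^2 * jw μ x) (Ioo (-1:ℝ) 1) := by
  apply Integrable.mono' hu.2
  · exact (((hu.1.continuousOn).pow 2).mul (jw_cont μ)).aestronglyMeasurable measurableSet_Ioo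
  · filter_upwards [ae_restrict_mem measurableSet_Ioo] with x hx
    have hw := jw_nonneg (ν := μ) hx
    rw [Real.norm_eq_abs, abs_of_nonneg (mul_nonneg (sq_nonneg _) hw)]
    nlinarith [sq_nonneg (deriv u x), sq_nonneg (u x)]

lemma memH1w_int2 {μ : ℝ} {u : ℝ → ℝ} (hu : MemH1w μ u) :
    IntegrableOn (fun x => (deriv u x)^2 * jw μ x) (Ioo (-1:ℝ) 1) := by
  apply Integrable.mono' hu.2
  · exact ((((measurable_deriv u).pow_const 2).aemeasurable).mul
      ((jw_cont μ).aemeasurable measurableSet_Ioo)).aestronglyMeasurable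
  · filter_upwards [ae_restrict_mem measurableSet_Ioo] with x hx
    have hw := jw_nonneg (ν := μ) hx
    rw [Real.norm_eq_abs, abs_of_nonneg (mul_nonneg (sq_nonneg _) hw)]
    nlinarith [sq_nonneg (deriv u x), sq_nonneg (u x)]

lemma memH1w_split {μ : ℝ} {u : ℝ → ℝ} (hu : MemH1w μ u) :
    ∫ x in Ioo (-1:ℝ) 1, ((u x)^2 + (deriv u x)^2) * jw μ x
      = (∫ x in Ioo (-1:ℝ) 1, (u x)^2 * jw μ x)
        + ∫ x in Ioo (-1:ℝ) 1, (deriv u x)^2 * jw μ x := by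
  rw [← integral_add (memH1w_int1 hu) (memH1w_int2 hu)]
  apply setIntegral_congr_fun measurableSet_Ioo
  intro x _
  ring

lemma int_sq_nonneg {μ : ℝ} (f g : ℝ → ℝ) :
    0 ≤ ∫ x in Ioo (-1:ℝ) 1, ((f x)^2 + (g x)^2) * jw μ x := by
  apply setIntegral_nonneg measurableSet_Ioo
  intro x hx
  have := jw_nonneg (ν := μ) hx
  positivity

lemma int1_nonneg {μ : ℝ} (f : ℝ → ℝ) :
    0 ≤ ∫ x in Ioo (-1:ℝ) 1, (f x)^2 * jw μ x := by
  apply setIntegral_nonneg measurableSet_Ioo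
  intro x hx
  have := jw_nonneg (ν := μ) hx
  positivity

lemma W_pos {μ : ℝ} (hμ₁ : -1 < μ) : 0 < ∫ x in Ioo (-1:ℝ) 1, jw μ x := by
  set m := min ((3/4:ℝ) ^ μ) 1 with hm
  have hm0 : 0 < m := lt_min (Real.rpow_pos_of_pos (by norm_num) μ) one_pos
  have hsub : Ioo (-(1/2):ℝ) (1/2) ⊆ Ioo (-1:ℝ) 1 := Ioo_subset_Ioo (by norm_num) (by norm_num)
  have hlow : ∀ x ∈ Ioo (-(1/2):ℝ) (1/2), m ≤ jw μ x := by
    intro x hx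
    have h1 : (3/4:ℝ) ≤ 1 - x^2 := by nlinarith [hx.1, hx.2]
    have h2 : 1 - x^2 ≤ 1 := by nlinarith [hx.1, hx.2]
    have h0 : (0:ℝ) < 1 - x^2 := by linarith
    rcases le_or_gt 0 μ with h | h
    · exact le_trans (min_le_left _ _) (Real.rpow_le_rpow (by norm_num) h1 h)
    · refine le_trans (min_le_right _ _) ?_
      calc (1:ℝ) = 1 ^ μ := (Real.one_rpow μ).symm
      _ ≤ (1 - x^2) ^ μ := Real.rpow_le_rpow_of_nonpos h0 h2 h.le
  have hvol : (volume (Ioo (-(1/2):ℝ) (1/2))).toReal = 1 := by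
    rw [Real.volume_Ioo]
    norm_num
  have h1 : m * (volume (Ioo (-(1/2):ℝ) (1/2))).toReal
      ≤ ∫ x in Ioo (-(1/2):ℝ) (1/2), jw μ x :=
    setIntegral_ge_of_const_le_real measurableSet_Ioo (by simp) hlow
      ((jw_integrableOn hμ₁).mono_set hsub)
  have h2 : ∫ x in Ioo (-(1/2):ℝ) (1/2), jw μ x ≤ ∫ x in Ioo (-1:ℝ) 1, jw μ x := by
    apply setIntegral_mono_set (jw_integrableOn hμ₁)
    · filter_upwards [ae_restrict_mem measurableSet_Ioo] with x hx
      exact jw_nonneg hx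
    · exact HasSubset.Subset.eventuallyLE hsub
  rw [hvol] at h1
  linarith

lemma sup_bound_normalized {μ : ℝ} (hμ₁ : -1 < μ) (hμ₂ : μ < 1) :
    ∃ C₀ > 0, ∀ u : ℝ → ℝ, MemH1w μ u →
      (∫ x in Ioo (-1:ℝ) 1, ((u x)^2 + (deriv u x)^2) * jw μ x) ≤ 1 →
      ∀ x ∈ Ioo (-1:ℝ) 1, |u x| ≤ C₀ := by
  set W := ∫ x in Ioo (-1:ℝ) 1, jw μ x with hWdef
  set I := ∫ x in Ioo (-1:ℝ) 1, jw (-μ) x with hIdef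
  have hW : 0 < W := W_pos hμ₁
  have hμ' : (-1:ℝ) < -μ := by linarith
  have hjwneg : IntegrableOn (jw (-μ)) (Ioo (-1:ℝ) 1) := jw_integrableOn hμ'
  have hI : 0 ≤ I := by
    apply setIntegral_nonneg measurableSet_Ioo
    intro x hx; exact jw_nonneg hx
  refine ⟨Real.sqrt (2/W) + (1 + I)/2, by positivity, ?_⟩
  intro u hu hN x hx
  have hA : ∫ z in Ioo (-1:ℝ) 1, (u z)^2 * jw μ z ≤ 1 := by
    have := memH1w_split hu
    have hB0 : 0 ≤ ∫ z in Ioo (-1:ℝ) 1, (deriv u z)^2 * jw μ z := int1_nonneg _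
    linarith
  have hB : ∫ z in Ioo (-1:ℝ) 1, (deriv u z)^2 * jw μ z ≤ 1 := by
    have := memH1w_split hu
    have hA0 : 0 ≤ ∫ z in Ioo (-1:ℝ) 1, (u z)^2 * jw μ z := int1_nonneg _
    linarith
  -- find a good point y
  have hy : ∃ y ∈ Ioo (-1:ℝ) 1, (u y)^2 ≤ 2/W := by
    by_contra h
    push_neg at h
    have h1 : ∫ z in Ioo (-1:ℝ) 1, (2/W) * jw μ z ≤ ∫ z in Ioo (-1:ℝ) 1, (u z)^2 * jw μ z := by
      apply setIntegral_mono_on ((jw_integrableOn hμ₁).const_mul _) (memH1w_int1 hu)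
        measurableSet_Ioo
      intro z hz
      exact mul_le_mul_of_nonneg_right (h z hz).le (jw_nonneg hz)
    rw [integral_const_mul, ← hWdef, div_mul_cancel₀ _ hW.ne'] at h1
    linarith
  obtain ⟨y, hymem, hy2⟩ := hy
  -- pointwise bound on |u'|
  have hptws : ∀ z ∈ Ioo (-1:ℝ) 1, |deriv u z| ≤ ((deriv u z)^2 * jw μ z + jw (-μ) z)/2 := by
    intro z hz
    have hw : 0 < jw μ z := jw_pos hz
    have hbase : (0:ℝ) ≤ 1 - z^2 := by nlinarith [hz.1, hz.2]
    have hinv : jw (-μ) z = (jw μ z)⁻¹ := by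
      unfold jw; rw [Real.rpow_neg hbase]
    rw [hinv]
    set a := deriv u z with ha
    set w := jw μ z with hwdef
    have h1 : w * w⁻¹ = 1 := mul_inv_cancel₀ hw.ne'
    have key : 2 * |a| * w ≤ a^2*w^2 + 1 := by
      nlinarith [sq_nonneg (|a| * w - 1), sq_abs a]
    have h3 := mul_le_mul_of_nonneg_right key (inv_nonneg.mpr hw.le)
    have e1 : 2 * |a| * w * w⁻¹ = 2 * |a| := by rw [mul_assoc, h1, mul_one]
    have e2 : (a^2*w^2+1)*w⁻¹ = a^2*w + w⁻¹ := by
      have hww : w^2 * w⁻¹ = w := by rw [sq, mul_assoc, h1, mul_one]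
      calc (a^2*w^2+1)*w⁻¹ = a^2*(w^2*w⁻¹) + w⁻¹ := by ring
      _ = a^2*w + w⁻¹ := by rw [hww]
    rw [e1, e2] at h3
    linarith
  have hderiv_int : IntegrableOn (deriv u) (Ioo (-1:ℝ) 1) := by
    apply Integrable.mono' (((memH1w_int2 hu).add hjwneg).div_const 2)
    · exact (measurable_deriv u).aestronglyMeasurable
    · filter_upwards [ae_restrict_mem measurableSet_Ioo] with z hz
      simpa [Real.norm_eq_abs] using hptws z hz
  have habs_int : IntegrableOn (fun z => |deriv u z|) (Ioo (-1:ℝ) 1) := hderiv_int.abs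
  have hL1 : ∫ z in Ioo (-1:ℝ) 1, |deriv u z| ≤ (1 + I)/2 := by
    have h1 : ∫ z in Ioo (-1:ℝ) 1, |deriv u z|
        ≤ ∫ z in Ioo (-1:ℝ) 1, ((deriv u z)^2 * jw μ z + jw (-μ) z)/2 := by
      apply setIntegral_mono_on habs_int (((memH1w_int2 hu).add hjwneg).div_const 2)
        measurableSet_Ioo
      intro z hz; exact hptws z hz
    rw [integral_div, integral_add (memH1w_int2 hu) hjwneg] at h1
    have := hB
    rw [← hIdef] at h1
    linarith
  -- FTC
  have hftc : ∀ a b : ℝ, a ∈ Ioo (-1:ℝ) 1 → b ∈ Ioo (-1:ℝ) 1 →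
      |u b - u a| ≤ ∫ z in Ioo (-1:ℝ) 1, |deriv u z| := by
    intro a b ha hb
    wlog hab : a ≤ b generalizing a b with Hw
    · rw [abs_sub_comm]; exact Hw b a hb ha (le_of_not_ge hab)
    have hsub : Icc a b ⊆ Ioo (-1:ℝ) 1 := Icc_subset_Ioo ha.1 hb.2
    have heq : ∫ z in a..b, deriv u z = u b - u a := by
      apply intervalIntegral.integral_eq_sub_of_hasDerivAt
      · intro t ht
        rw [uIcc_of_le hab] at ht
        have htm := hsub ht
        exact (hu.1.differentiableAt (Ioo_mem_nhds htm.1 htm.2)).hasDerivAt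
      · apply IntegrableOn.intervalIntegrable
        apply hderiv_int.mono_set
        rw [uIcc_of_le hab]
        exact hsub
    calc |u b - u a| = |∫ z in a..b, deriv u z| := by rw [heq]
    _ ≤ ∫ z in a..b, |deriv u z| := intervalIntegral.abs_integral_le_integral_abs hab
    _ = ∫ z in Ioc a b, |deriv u z| := intervalIntegral.integral_of_le hab
    _ ≤ ∫ z in Ioo (-1:ℝ) 1, |deriv u z| := by
        apply setIntegral_mono_set habs_int
        · exact ae_of_all _ fun z => abs_nonneg _
        · exact HasSubset.Subset.eventuallyLE (Ioc_subset_Icc_self.trans hsub)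
  have h1 : |u y| ≤ Real.sqrt (2/W) := by
    rw [← Real.sqrt_sq_eq_abs]
    exact Real.sqrt_le_sqrt hy2
  have h2 := hftc y x hymem hx
  calc |u x| = |u y + (u x - u y)| := by ring_nf
  _ ≤ |u y| + |u x - u y| := abs_add_le _ _
  _ ≤ Real.sqrt (2/W) + (1 + I)/2 := by linarith

lemma sup_bound {μ : ℝ} (hμ₁ : -1 < μ) (hμ₂ : μ < 1) :
    ∃ K > 0, ∀ u : ℝ → ℝ, MemH1w μ u → ∀ x ∈ Ioo (-1:ℝ) 1,
      (u x)^2 ≤ K * ∫ z in Ioo (-1:ℝ) 1, ((u z)^2 + (deriv u z)^2) * jw μ z := by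
  obtain ⟨C₀, hC₀, hbd⟩ := sup_bound_normalized hμ₁ hμ₂
  refine ⟨C₀^2, by positivity, ?_⟩
  intro u hu x hx
  set N := ∫ z in Ioo (-1:ℝ) 1, ((u z)^2 + (deriv u z)^2) * jw μ z with hNdef
  have hN0 : 0 ≤ N := int_sq_nonneg u (deriv u)
  have key : ∀ ε : ℝ, 0 < ε → (u x)^2 ≤ C₀^2 * (N + ε) := by
    intro ε hε
    set s := Real.sqrt (N + ε) with hs
    have hs0 : 0 < s := Real.sqrt_pos.mpr (by linarith)
    set v : ℝ → ℝ := fun z => s⁻¹ * u z with hv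
    have hvd : DifferentiableOn ℝ v (Ioo (-1:ℝ) 1) := hu.1.const_smul s⁻¹
    have hvderiv : ∀ z ∈ Ioo (-1:ℝ) 1, deriv v z = s⁻¹ * deriv u z := by
      intro z hz
      exact deriv_const_mul _ (hu.1.differentiableAt (Ioo_mem_nhds hz.1 hz.2))
    have heq : EqOn (fun z => (s⁻¹)^2 * (((u z)^2 + (deriv u z)^2) * jw μ z))
        (fun z => ((v z)^2 + (deriv v z)^2) * jw μ z) (Ioo (-1:ℝ) 1) := by
      intro z hz
      simp only [hv]
      rw [hvderiv z hz]
      ring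
    have hvint : IntegrableOn (fun z => ((v z)^2 + (deriv v z)^2) * jw μ z) (Ioo (-1:ℝ) 1) :=
      IntegrableOn.congr_fun (hu.2.const_mul ((s⁻¹)^2)) heq measurableSet_Ioo
    have hvmem : MemH1w μ v := ⟨hvd, hvint⟩
    have hsq : s^2 = N + ε := Real.sq_sqrt (by linarith)
    have hvN : ∫ z in Ioo (-1:ℝ) 1, ((v z)^2 + (deriv v z)^2) * jw μ z ≤ 1 := by
      rw [← setIntegral_congr_fun measurableSet_Ioo heq, integral_const_mul, ← hNdef]
      have h1 : (s⁻¹)^2 = (N + ε)⁻¹ := by rw [inv_pow, hsq]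
      rw [h1]
      have h2 : (N + ε)⁻¹ * N ≤ (N + ε)⁻¹ * (N + ε) := by
        apply mul_le_mul_of_nonneg_left (by linarith) (by positivity)
      rw [inv_mul_cancel₀ (by positivity)] at h2
      exact h2
    have hvb := hbd v hvmem hvN x hx
    have hux : |u x| ≤ s * C₀ := by
      have huv : u x = s * v x := by
        simp only [hv]
        rw [← mul_assoc, mul_inv_cancel₀ hs0.ne', one_mul]
      rw [huv, abs_mul, abs_of_pos hs0]
      exact mul_le_mul_of_nonneg_left hvb hs0.le
    calc (u x)^2 = |u x|^2 := (sq_abs _).symm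
    _ ≤ (s * C₀)^2 := pow_le_pow_left₀ (abs_nonneg _) hux 2
    _ = C₀^2 * (N + ε) := by rw [mul_pow, hsq]; ring
  by_contra hcon
  push_neg at hcon
  set D := (u x)^2 - C₀^2 * N with hD
  have hD0 : 0 < D := by simp only [hD]; linarith
  have hC2 : (0:ℝ) < C₀^2 := by positivity
  have h1 := key (D / (2 * C₀^2)) (by positivity)
  have h2 : C₀^2 * (N + D / (2 * C₀^2)) = C₀^2 * N + D/2 := by
    field_simp
  rw [h2] at h1
  simp only [hD] at h1
  linarith

theorem weighted_H1_algebra (μ : ℝ) (hμ₁ : -1 < μ) (hμ₂ : μ < 1) :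
    ∃ C > 0, ∀ η u : ℝ → ℝ, MemH1w μ η → MemH1w μ u →
      MemH1w μ (fun x => η x * u x) ∧
      H1wNorm μ (fun x => η x * u x) ≤ C * H1wNorm μ η * H1wNorm μ u := by
  obtain ⟨K, hK, hsup⟩ := sup_bound hμ₁ hμ₂
  refine ⟨2 * Real.sqrt K, by positivity, ?_⟩
  intro η u hη hu
  set Nη := ∫ z in Ioo (-1:ℝ) 1, ((η z)^2 + (deriv η z)^2) * jw μ z with hNη
  set Nu := ∫ z in Ioo (-1:ℝ) 1, ((u z)^2 + (deriv u z)^2) * jw μ z with hNu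
  have hNη0 : 0 ≤ Nη := int_sq_nonneg η (deriv η)
  have hNu0 : 0 ≤ Nu := int_sq_nonneg u (deriv u)
  have hηx : ∀ x ∈ Ioo (-1:ℝ) 1, (η x)^2 ≤ K * Nη := hsup η hη
  have hux : ∀ x ∈ Ioo (-1:ℝ) 1, (u x)^2 ≤ K * Nu := hsup u hu
  have hd : DifferentiableOn ℝ (fun x => η x * u x) (Ioo (-1:ℝ) 1) := hη.1.mul hu.1
  have hdx : ∀ x ∈ Ioo (-1:ℝ) 1, deriv (fun y => η y * u y) x
      = deriv η x * u x + η x * deriv u x := by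
    intro x hx
    exact deriv_mul (hη.1.differentiableAt (Ioo_mem_nhds hx.1 hx.2))
      (hu.1.differentiableAt (Ioo_mem_nhds hx.1 hx.2))
  set g : ℝ → ℝ := fun z => 2*K*Nη * (((u z)^2 + (deriv u z)^2) * jw μ z)
      + 2*K*Nu * (((η z)^2 + (deriv η z)^2) * jw μ z) with hg
  have hgint : IntegrableOn g (Ioo (-1:ℝ) 1) :=
    (hu.2.const_mul (2*K*Nη)).add (hη.2.const_mul (2*K*Nu))
  have hptw : ∀ x ∈ Ioo (-1:ℝ) 1,
      ((η x * u x)^2 + (deriv (fun y => η y * u y) x)^2) * jw μ x ≤ g x := by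
    intro x hx
    rw [hdx x hx]
    have hw := jw_nonneg (ν := μ) hx
    have h1 := hηx x hx
    have h2 := hux x hx
    have e1 : (η x * u x)^2 ≤ K * Nη * (u x)^2 := by nlinarith [sq_nonneg (u x)]
    have e2 : (deriv η x * u x + η x * deriv u x)^2
        ≤ 2*(K*Nu)*(deriv η x)^2 + 2*(K*Nη)*(deriv u x)^2 := by
      nlinarith [sq_nonneg (deriv η x * u x - η x * deriv u x), sq_nonneg (deriv η x),
        sq_nonneg (deriv u x)]
    have e3 : ((η x * u x)^2 + (deriv η x * u x + η x * deriv u x)^2) * jw μ x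
        ≤ (K * Nη * (u x)^2 + (2*(K*Nu)*(deriv η x)^2 + 2*(K*Nη)*(deriv u x)^2)) * jw μ x :=
      mul_le_mul_of_nonneg_right (by linarith) hw
    refine e3.trans ?_
    simp only [hg]
    have n1 : 0 ≤ K * Nη * ((u x)^2 * jw μ x) :=
      mul_nonneg (mul_nonneg hK.le hNη0) (mul_nonneg (sq_nonneg _) hw)
    have n2 : 0 ≤ 2 * (K * Nu) * ((η x)^2 * jw μ x) :=
      mul_nonneg (by positivity) (mul_nonneg (sq_nonneg _) hw)
    nlinarith [n1, n2]
  have hlhs_int : IntegrableOn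
      (fun x => ((η x * u x)^2 + (deriv (fun y => η y * u y) x)^2) * jw μ x)
      (Ioo (-1:ℝ) 1) := by
    apply Integrable.mono' hgint
    · apply AEMeasurable.aestronglyMeasurable
      apply AEMeasurable.mul
      · apply AEMeasurable.add
        · exact ((hd.continuousOn.pow 2).aemeasurable measurableSet_Ioo)
        · exact ((measurable_deriv _).pow_const 2).aemeasurable
      · exact (jw_cont μ).aemeasurable measurableSet_Ioo
    · filter_upwards [ae_restrict_mem measurableSet_Ioo] with x hx
      have hw := jw_nonneg (ν := μ) hx
      rw [Real.norm_eq_abs, abs_of_nonneg (mul_nonneg (by positivity) hw)]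
      exact hptw x hx
  refine ⟨⟨hd, hlhs_int⟩, ?_⟩
  have hint_le : ∫ x in Ioo (-1:ℝ) 1,
      ((η x * u x)^2 + (deriv (fun y => η y * u y) x)^2) * jw μ x
      ≤ 2*K*Nη * Nu + 2*K*Nu * Nη := by
    have h := setIntegral_mono_on hlhs_int hgint measurableSet_Ioo hptw
    rwa [integral_add (hu.2.const_mul (2*K*Nη)) (hη.2.const_mul (2*K*Nu)),
      integral_const_mul, integral_const_mul, ← hNu, ← hNη] at h
  have hgoal : H1wNorm μ (fun x => η x * u x) = Real.sqrt (∫ x in Ioo (-1:ℝ) 1,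
      ((η x * u x)^2 + (deriv (fun y => η y * u y) x)^2) * jw μ x) := rfl
  rw [hgoal]
  calc Real.sqrt (∫ x in Ioo (-1:ℝ) 1,
        ((η x * u x)^2 + (deriv (fun y => η y * u y) x)^2) * jw μ x)
      ≤ Real.sqrt (2*K*Nη * Nu + 2*K*Nu * Nη) := Real.sqrt_le_sqrt hint_le
  _ = 2 * Real.sqrt K * Real.sqrt Nη * Real.sqrt Nu := by
      have hsq : (2 * Real.sqrt K * Real.sqrt Nη * Real.sqrt Nu)^2 = 2*K*Nη * Nu + 2*K*Nu * Nη := by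
        rw [mul_pow, mul_pow, mul_pow, Real.sq_sqrt hK.le, Real.sq_sqrt hNη0,
          Real.sq_sqrt hNu0]
        ring
      rw [← hsq]
      exact Real.sqrt_sq (by positivity)
  _ = 2 * Real.sqrt K * H1wNorm μ η * H1wNorm μ u := by rw [H1wNorm, H1wNorm]
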